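/- Let Φ : Ω_ζ → A_n^m be monogenic in a domain Ω_ζ where Ω ⊂ ℝ³ is convex in the direction of the straight line L_u, and suppose a_u ∉ ℝ or b_u ∉ ℝ. If ζ_1, ζ_2 ∈ Ω_ζ satisfy ζ_2 − ζ_1 ∈ {x e_1 + y e_2 + z e_3 : (x,y,z) ∈ L_u} (equivalently f_u(ζ_1) = f_u(ζ_2)), then Φ(ζ_1) − Φ(ζ_2) ∈ 𝓘_u, the maximal ideal span{I_k : k ≠ u}. Consequently the assignment F_u(ξ_u) := f_u(Φ(ζ)) for any ζ with f_u(ζ) = ξ_u is a well-defined function on D_u. -/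

import Mathlib

open Filter Set

/-- Lemma 4: if `Φ` is monogenic in `Ω_ζ`, `Ω` is convex in the direction of
the straight line `L_u` (the kernel of `(x,y,z) ↦ ξ_u`), and `a_u ∉ ℝ` or
`b_u ∉ ℝ`, then for `ζ₁, ζ₂ ∈ Ω_ζ` with `ζ₂ − ζ₁` in the direction of `L_u` one
has `Φ(ζ₁) − Φ(ζ₂) ∈ 𝓘_u`; consequently `F_u(ξ_u) := f_u(Φ(ζ))` is
well-defined on `D_u`. -/
theorem difference_in_maximal_ideal (n m : ℕ) (hm : m ≤ n) (A : Type*)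
    [NormedCommRing A] [NormedAlgebra ℂ A]
    (I : Module.Basis (Fin n) ℂ A)
    (hidem : ∀ r s : Fin n, r.val < m → s.val < m →
      I r * I s = if r = s then I r else 0)
    (Υ : Fin n → Fin n → Fin n → ℂ)
    (hnil : ∀ r s : Fin n, m ≤ r.val → m ≤ s.val →
      I r * I s = ∑ k ∈ Finset.univ.filter (fun k : Fin n => max r.val s.val < k.val),
        Υ r s k • I k)
    (u : Fin n → Fin n)
    (hu : ∀ s : Fin n, m ≤ s.val → (u s).val < m)
    (hmul3 : ∀ s : Fin n, m ≤ s.val → ∀ r : Fin n, r.val < m →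
      I r * I s = if r = u s then I s else 0)
    (hone : ∑ w ∈ Finset.univ.filter (fun w : Fin n => w.val < m), I w = 1)
    (a b : Fin n → ℂ) (e₂ e₃ : A)
    (he₂ : e₂ = ∑ r, a r • I r) (he₃ : e₃ = ∑ r, b r • I r)
    (hindep : LinearIndependent ℝ ![(1 : A), e₂, e₃])
    (w : Fin n) (hw : w.val < m)
    (hab : (a w).im ≠ 0 ∨ (b w).im ≠ 0)
    (Ω : Set (ℝ × ℝ × ℝ)) (hΩo : IsOpen Ω) (hΩc : IsConnected Ω)
    (ξ : Fin n → (ℝ × ℝ × ℝ) → ℂ)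
    (hξ : ∀ v p, ξ v p = (p.1 : ℂ) + (p.2.1 : ℂ) * a v + (p.2.2 : ℂ) * b v)
    -- `Ω` is convex in the direction of the line `L_u = ker (ξ_u)`
    (hconv : ∀ p ∈ Ω, ∀ q ∈ Ω, ξ w q = ξ w p → segment ℝ p q ⊆ Ω)
    -- `Φ` is monogenic in `Ω_ζ`
    (φ : ℝ × ℝ × ℝ → A)
    (hcont : ContinuousOn φ Ω)
    (hmono : ∀ p ∈ Ω, ∃ D : A, ∀ h₁ h₂ h₃ : ℝ,
      Tendsto (fun ε : ℝ => ε⁻¹ • (φ (p + ε • (h₁, h₂, h₃)) - φ p))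
        (nhdsWithin 0 (Ioi 0))
        (nhds ((h₁ • (1 : A) + h₂ • e₂ + h₃ • e₃) * D))) :
    ∀ p ∈ Ω, ∀ q ∈ Ω, ξ w p = ξ w q →
      (φ p - φ q ∈ Submodule.span ℂ (I '' {k : Fin n | k ≠ w})
        ∧ I.coord w (φ p) = I.coord w (φ q)) := by
  classical
  intro p hp q hq hpq
  haveI : FiniteDimensional ℂ A := Module.Finite.of_basis I
  set f : A →ₗ[ℂ] ℂ := I.coord w with hf
  have hbasis : ∀ r : Fin n, f (I r) = if r = w then 1 else 0 := by
    intro r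
    simp [hf, Module.Basis.coord_apply, Module.Basis.repr_self, Finsupp.single_apply]
  have hbz : ∀ r : Fin n, m ≤ r.val → f (I r) = 0 := by
    intro r hr
    rw [hbasis, if_neg]
    rintro rfl; omega
  have hprod : ∀ r s : Fin n, f (I r * I s) = f (I r) * f (I s) := by
    intro r s
    by_cases hr : r.val < m <;> by_cases hs : s.val < m
    · rw [hidem r s hr hs]
      by_cases h : r = s
      · subst h
        rw [if_pos rfl, hbasis]
        split_ifs <;> ring
      · rw [if_neg h, map_zero, hbasis, hbasis]
        split_ifs with h1 h2
        · exact absurd (h1.trans h2.symm) h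
        · ring
        · ring
        · ring
    · push_neg at hs
      rw [hmul3 s hs r hr]
      split_ifs
      · rw [hbz s hs, mul_zero]
      · rw [map_zero, hbz s hs, mul_zero]
    · push_neg at hr
      rw [mul_comm (I r) (I s), hmul3 r hr s hs]
      split_ifs
      · rw [hbz r hr, zero_mul]
      · rw [map_zero, hbz r hr, zero_mul]
    · push_neg at hr hs
      rw [hnil r s hr hs, map_sum, Finset.sum_eq_zero, hbz r hr, zero_mul]
      intro k hk
      have hk' : max r.val s.val < k.val := (Finset.mem_filter.mp hk).2
      rw [map_smul, hbz k (by omega), smul_zero]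
  have key : ∀ r : Fin n, ∀ y : A, f (I r * y) = f (I r) * f y := by
    intro r
    have h1 : f ∘ₗ LinearMap.mulLeft ℂ (I r) = f (I r) • f :=
      I.ext fun s => by
        rw [LinearMap.comp_apply, LinearMap.mulLeft_apply, LinearMap.smul_apply,
          smul_eq_mul, hprod r s]
    intro y
    have h2 := LinearMap.congr_fun h1 y
    rw [LinearMap.comp_apply, LinearMap.mulLeft_apply, LinearMap.smul_apply,
      smul_eq_mul] at h2
    exact h2
  have hmul : ∀ x y : A, f (x * y) = f x * f y := by
    intro x y
    have h1 : f ∘ₗ LinearMap.mulRight ℂ y = f y • f :=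
      I.ext fun r => by
        rw [LinearMap.comp_apply, LinearMap.mulRight_apply, LinearMap.smul_apply,
          smul_eq_mul, key r y]
        ring
    have h2 := LinearMap.congr_fun h1 x
    rw [LinearMap.comp_apply, LinearMap.mulRight_apply, LinearMap.smul_apply,
      smul_eq_mul] at h2
    rw [h2]
    ring
  have f1 : f (1 : A) = 1 := by
    rw [← hone, map_sum]
    rw [Finset.sum_congr rfl fun r _ => hbasis r, Finset.sum_ite_eq']
    rw [if_pos (Finset.mem_filter.mpr ⟨Finset.mem_univ w, hw⟩)]
  have hsmulbasis : ∀ (c : Fin n → ℂ) (r : Fin n),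
      f (c r • I r) = if r = w then c r else 0 := by
    intro c r
    rw [map_smul, hbasis r, smul_eq_mul]
    split_ifs <;> ring
  have fe2 : f e₂ = a w := by
    rw [he₂, map_sum, Finset.sum_congr rfl fun r _ => hsmulbasis a r,
      Finset.sum_ite_eq', if_pos (Finset.mem_univ w)]
  have fe3 : f e₃ = b w := by
    rw [he₃, map_sum, Finset.sum_congr rfl fun r _ => hsmulbasis b r,
      Finset.sum_ite_eq', if_pos (Finset.mem_univ w)]
  have hdirc : ((q.1 - p.1 : ℝ) : ℂ) + ((q.2.1 - p.2.1 : ℝ) : ℂ) * a w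
      + ((q.2.2 - p.2.2 : ℝ) : ℂ) * b w = 0 := by
    rw [hξ, hξ] at hpq
    push_cast
    linear_combination -hpq
  set γ : ℝ → ℝ × ℝ × ℝ := fun t => p + t • (q - p) with hγ
  set ψ : ℝ → ℂ := fun t => f (φ (γ t)) with hψ
  have hseg : ∀ t ∈ Icc (0:ℝ) 1, γ t ∈ Ω := by
    intro t ht
    apply hconv p hp q hq hpq.symm
    refine ⟨1 - t, t, by linarith [ht.2], ht.1, by ring, ?_⟩
    simp only [hγ]
    module
  have fc : Continuous f := f.continuous_of_finiteDimensional
  have hγc : Continuous γ := by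
    exact continuous_const.add (continuous_id.smul continuous_const)
  have hcontψ : ContinuousOn ψ (Icc (0:ℝ) 1) := by
    apply fc.comp_continuousOn
    exact hcont.comp hγc.continuousOn hseg
  have hderiv : ∀ t ∈ Ico (0:ℝ) 1, HasDerivWithinAt ψ 0 (Ici t) t := by
    intro t ht
    have hx : γ t ∈ Ω := hseg t ⟨ht.1, ht.2.le⟩
    obtain ⟨D, hD⟩ := hmono (γ t) hx
    have hD' := hD (q.1 - p.1) (q.2.1 - p.2.1) (q.2.2 - p.2.2)
    have hqp : ((q.1 - p.1, q.2.1 - p.2.1, q.2.2 - p.2.2) : ℝ × ℝ × ℝ) = q - p := rfl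
    have harg : ∀ ε : ℝ,
        γ t + ε • ((q.1 - p.1, q.2.1 - p.2.1, q.2.2 - p.2.2) : ℝ × ℝ × ℝ) = γ (t + ε) := by
      intro ε
      simp only [hγ, hqp, add_smul, add_assoc]
    have hval : f ((q.1 - p.1) • (1 : A) + (q.2.1 - p.2.1) • e₂ + (q.2.2 - p.2.2) • e₃) = 0 := by
      rw [map_add, map_add, LinearMap.map_smul_of_tower, LinearMap.map_smul_of_tower,
        LinearMap.map_smul_of_tower, f1, fe2, fe3, Complex.real_smul,
        Complex.real_smul, Complex.real_smul, mul_one]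
      exact hdirc
    have h2 : f (((q.1 - p.1) • (1 : A) + (q.2.1 - p.2.1) • e₂ + (q.2.2 - p.2.2) • e₃) * D)
        = 0 := by rw [hmul, hval, zero_mul]
    have hlim : Tendsto (fun ε : ℝ => ε⁻¹ • (ψ (t + ε) - ψ t))
        (nhdsWithin 0 (Ioi 0)) (nhds 0) := by
      have hcomp := (fc.tendsto _).comp hD'
      rw [h2] at hcomp
      refine hcomp.congr fun ε => ?_
      simp only [Function.comp_apply, hψ]
      rw [harg ε, LinearMap.map_smul_of_tower, map_sub]
    rw [hasDerivWithinAt_iff_tendsto_slope, Ici_sdiff_left]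
    have hshift : Tendsto (fun y : ℝ => y - t) (nhdsWithin t (Ioi t)) (nhdsWithin 0 (Ioi 0)) := by
      apply tendsto_nhdsWithin_iff.mpr
      constructor
      · have h3 := (continuous_sub_right t).tendsto t
        rw [sub_self] at h3
        exact h3.mono_left nhdsWithin_le_nhds
      · filter_upwards [self_mem_nhdsWithin] with y hy
        exact mem_Ioi.mpr (sub_pos.mpr (mem_Ioi.mp hy))
    have h4 := hlim.comp hshift
    refine h4.congr fun y => ?_
    have h5 : t + (y - t) = y := by ring
    rw [Function.comp_apply, h5, slope_def_module]
  have hcc := constant_of_has_deriv_right_zero hcontψ hderiv 1 (right_mem_Icc.mpr zero_le_one)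
  have hγ1 : γ 1 = q := by
    simp only [hγ, one_smul]
    abel
  have hγ0 : γ 0 = p := by
    simp only [hγ, zero_smul, add_zero]
  have heq : f (φ q) = f (φ p) := by
    have h6 := hcc
    simp only [hψ] at h6
    rw [hγ1, hγ0] at h6
    exact h6
  have hzero : f (φ p - φ q) = 0 := by
    rw [map_sub, heq, sub_self]
  constructor
  · rw [← I.sum_repr (φ p - φ q)]
    apply Submodule.sum_mem
    intro k _
    by_cases hk : k = w
    · subst hk
      have : I.repr (φ p - φ q) k = 0 := by
        have : f (φ p - φ q) = I.repr (φ p - φ q) k := by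
          rw [hf]; rfl
        rw [← this, hzero]
      rw [this, zero_smul]
      exact Submodule.zero_mem _
    · exact Submodule.smul_mem _ _ (Submodule.subset_span ⟨k, hk, rfl⟩)
  · exact heq.symm
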